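/- Let F be any field and let b1, b2, b3 ∈ F, not all zero, with b1 + b2 + b3 = 0. Then (b1, b2, b3) is not ℵ0-distinct-regular over F; that is, there exists an ℵ0-coloring of F such that there are no pairwise distinct e1, e2, e3 ∈ F of the same color satisfying b1·e1 + b2·e2 + b3·e3 = 0. -/

import Mathlib

set_option maxHeartbeats 1000000

section TopList

variable {ι K : Type*} [LinearOrder ι] [Zero K]

noncomputable def topList : (ι →₀ K) → List K := fun f =>
  if h : f.support.Nonempty then
    f (f.support.max' h) :: topList (f.erase (f.support.max' h))
  else []
  termination_by f => f.support.card
  decreasing_by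
    simp only [Finsupp.support_erase]
    exact Finset.card_erase_lt_of_mem (Finset.max'_mem _ h)

theorem topList_ne (f : ι →₀ K) (h : f.support.Nonempty) :
    topList f = f (f.support.max' h) :: topList (f.erase (f.support.max' h)) := by
  rw [topList]; simp [h]

theorem topList_eq_nil {f : ι →₀ K} (h : topList f = []) : f = 0 := by
  by_contra hf
  have hne : f.support.Nonempty := Finsupp.support_nonempty_iff.mpr hf
  rw [topList_ne f hne] at h
  simp at h

theorem head_eq (f f' : ι →₀ K) (m : ι) (hm : m ∈ f.support) (hm' : m ∈ f'.support)
    (hmax : ∀ j ∈ f.support, j ≤ m) (hmax' : ∀ j ∈ f'.support, j ≤ m)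
    (h : topList f = topList f') : f m = f' m := by
  have h1 : f.support.Nonempty := ⟨m, hm⟩
  have h2 : f'.support.Nonempty := ⟨m, hm'⟩
  have e1 : f.support.max' h1 = m :=
    le_antisymm (Finset.max'_le _ _ _ hmax) (Finset.le_max' _ _ hm)
  have e2 : f'.support.max' h2 = m :=
    le_antisymm (Finset.max'_le _ _ _ hmax') (Finset.le_max' _ _ hm')
  rw [topList_ne f h1, topList_ne f' h2, e1, e2] at h
  exact (List.cons.injEq _ _ _ _ ▸ h).1

end TopList

section Core

variable {ι K : Type*} [LinearOrder ι] [Field K]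

theorem topList_core (c : K) (hc0 : c ≠ 0) (hc1 : c ≠ 1) :
    ∀ n : ℕ, ∀ g d : ι →₀ K,
    (g + c • d).support.card + (g + d).support.card + g.support.card ≤ n →
    d ≠ 0 →
    topList (g + c • d) = topList (g + d) → topList (g + d) = topList g → False := by
  intro n
  induction n using Nat.strong_induction_on with
  | _ n IH =>
    intro g d hcard hd h12 h23
    set g1 := g + c • d with hg1
    set g2 := g + d with hg2
    -- pairwise distinctness
    have hcd : c • d ≠ 0 := smul_ne_zero hc0 hd
    have hne13 : g1 ≠ g := by simpa [hg1] using hcd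
    have hne23 : g2 ≠ g := by simpa [hg2] using hd
    have hcd1 : c • d ≠ d := by
      intro h
      apply hd
      have : (c - 1) • d = 0 := by rw [sub_smul, one_smul, h, sub_self]
      rcases smul_eq_zero.mp this with h' | h'
      · exact absurd (sub_eq_zero.mp h') hc1
      · exact h'
    have hne12 : g1 ≠ g2 := fun h => hcd1 (add_left_cancel h)
    -- all three nonzero
    have h13 : topList g1 = topList g := h12.trans h23
    have hnz : g1 ≠ 0 ∧ g2 ≠ 0 ∧ g ≠ 0 := by
      refine ⟨fun h => ?_, fun h => ?_, fun h => ?_⟩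
      · have l1 : topList g1 = [] := by rw [h, topList]; simp
        have := topList_eq_nil (l1 ▸ h12.symm)
        exact hne12 (h.trans this.symm)
      · have l2 : topList g2 = [] := by rw [h, topList]; simp
        have := topList_eq_nil (l2 ▸ h23.symm)
        exact hne23 (h.trans this.symm)
      · have l3 : topList g = [] := by rw [h, topList]; simp
        have := topList_eq_nil (h23.trans l3)
        exact hne23 (this.trans h.symm)
    obtain ⟨hnz1, hnz2, hnz3⟩ := hnz
    have hs1 : g1.support.Nonempty := Finsupp.support_nonempty_iff.mpr hnz1
    have hs2 : g2.support.Nonempty := Finsupp.support_nonempty_iff.mpr hnz2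
    have hs3 : g.support.Nonempty := Finsupp.support_nonempty_iff.mpr hnz3
    set U : Finset ι := (g1.support ∪ g2.support) ∪ g.support with hU
    have hsub1 : g1.support ⊆ U := fun a ha => Finset.mem_union_left _ (Finset.mem_union_left _ ha)
    have hsub2 : g2.support ⊆ U := fun a ha => Finset.mem_union_left _ (Finset.mem_union_right _ ha)
    have hsub3 : g.support ⊆ U := fun a ha => Finset.mem_union_right _ ha
    have hUne : U.Nonempty := hs1.mono hsub1
    set m := U.max' hUne with hm
    have hle1 : ∀ j ∈ g1.support, j ≤ m := fun j hj => Finset.le_max' _ _ (hsub1 hj)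
    have hle2 : ∀ j ∈ g2.support, j ≤ m := fun j hj => Finset.le_max' _ _ (hsub2 hj)
    have hle3 : ∀ j ∈ g.support, j ≤ m := fun j hj => Finset.le_max' _ _ (hsub3 hj)
    have hv1 : g1 m = g m + c * d m := by simp [hg1]
    have hv2 : g2 m = g m + d m := by simp [hg2]
    by_cases hdm : d m = 0
    · -- all values at m agree and are nonzero
      have hveq1 : g1 m = g m := by rw [hv1, hdm]; ring
      have hveq2 : g2 m = g m := by rw [hv2, hdm]; ring
      have hmU : m ∈ U := U.max'_mem hUne
      have hgm : g m ≠ 0 := by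
        simp only [hU, Finset.mem_union, Finsupp.mem_support_iff] at hmU
        rcases hmU with (h' | h') | h'
        · rwa [hveq1] at h'
        · rwa [hveq2] at h'
        · exact h'
      have hm1 : m ∈ g1.support := by rw [Finsupp.mem_support_iff, hveq1]; exact hgm
      have hm2 : m ∈ g2.support := by rw [Finsupp.mem_support_iff, hveq2]; exact hgm
      have hmax1 : g1.support.max' hs1 = m :=
        le_antisymm (Finset.max'_le _ _ _ (hle1)) (Finset.le_max' _ _ hm1)
      have hmax2 : g2.support.max' hs2 = m :=
        le_antisymm (Finset.max'_le _ _ _ (hle2)) (Finset.le_max' _ _ hm2)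
      have hmax3 : g.support.max' hs3 = m :=
        le_antisymm (Finset.max'_le _ _ _ (hle3))
          (Finset.le_max' _ _ (Finsupp.mem_support_iff.mpr hgm))
      rw [topList_ne g1 hs1, topList_ne g2 hs2, hmax1, hmax2] at h12
      rw [topList_ne g2 hs2, topList_ne g hs3, hmax2, hmax3] at h23
      have t12 : topList (g1.erase m) = topList (g2.erase m) :=
        (List.cons.injEq _ _ _ _ ▸ h12).2
      have t23 : topList (g2.erase m) = topList (g.erase m) :=
        (List.cons.injEq _ _ _ _ ▸ h23).2
      -- erased versions satisfy the same relation
      have hdem : d.erase m = d := by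
        ext a
        rcases eq_or_ne a m with rfl | ha
        · simp [hdm]
        · simp [Finsupp.erase_ne ha]
      have he1 : g1.erase m = g.erase m + c • d := by
        rw [hg1, Finsupp.erase_add, ← hdem]
        congr 1
        ext a
        rcases eq_or_ne a m with rfl | ha
        · simp
        · simp [Finsupp.erase_ne ha]
      have he2 : g2.erase m = g.erase m + d := by
        rw [hg2, Finsupp.erase_add, hdem]
      -- cardinality decreases
      have hclt : (g.erase m + c • d).support.card + (g.erase m + d).support.card
          + (g.erase m).support.card < n := by
        rw [← he1, ← he2]
        have c1 : (g1.erase m).support.card < g1.support.card := by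
          rw [Finsupp.support_erase]
          exact Finset.card_erase_lt_of_mem hm1
        have c2 : (g2.erase m).support.card < g2.support.card := by
          rw [Finsupp.support_erase]
          exact Finset.card_erase_lt_of_mem hm2
        have c3 : (g.erase m).support.card ≤ g.support.card := by
          rw [Finsupp.support_erase]
          exact Finset.card_erase_le
        omega
      rw [he1, he2] at t12
      rw [he2] at t23
      exact IH _ hclt (g.erase m) d le_rfl hd t12 t23
    · -- values at m pairwise distinct; two are nonzero, contradiction via heads
      have hd12 : g1 m ≠ g2 m := by
        rw [hv1, hv2]
        intro h
        have : (c - 1) * d m = 0 := by linear_combination h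
        rcases mul_eq_zero.mp this with h' | h'
        · exact hc1 (sub_eq_zero.mp h')
        · exact hdm h'
      have hd13 : g1 m ≠ g m := by
        rw [hv1]
        intro h
        have : c * d m = 0 := by linear_combination h
        rcases mul_eq_zero.mp this with h' | h'
        · exact hc0 h'
        · exact hdm h'
      have hd23 : g2 m ≠ g m := by
        rw [hv2]
        intro h
        exact hdm (by linear_combination h)
      by_cases hz1 : g1 m = 0
      · have hn2 : g2 m ≠ 0 := fun h => hd12 (hz1.trans h.symm)
        have hn3 : g m ≠ 0 := fun h => hd13 (hz1.trans h.symm)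
        exact hd23 (head_eq g2 g m (Finsupp.mem_support_iff.mpr hn2)
          (Finsupp.mem_support_iff.mpr hn3) hle2 hle3 h23)
      · by_cases hz2 : g2 m = 0
        · have hn3 : g m ≠ 0 := fun h => hd23 (hz2.trans h.symm)
          exact hd13 (head_eq g1 g m (Finsupp.mem_support_iff.mpr hz1)
            (Finsupp.mem_support_iff.mpr hn3) hle1 hle3 h13)
        · exact hd12 (head_eq g1 g2 m (Finsupp.mem_support_iff.mpr hz1)
            (Finsupp.mem_support_iff.mpr hz2) hle1 hle2 h12)

end Core

theorem not_aleph0_distinct_regular (F : Type*) [Field F] (b1 b2 b3 : F)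
    (hb : ¬ (b1 = 0 ∧ b2 = 0 ∧ b3 = 0)) (hsum : b1 + b2 + b3 = 0) :
    ∃ COL : F → ℕ,
      ¬ ∃ e1 e2 e3 : F,
        e1 ≠ e2 ∧ e1 ≠ e3 ∧ e2 ≠ e3 ∧
        COL e1 = COL e2 ∧ COL e2 = COL e3 ∧
        b1 * e1 + b2 * e2 + b3 * e3 = 0 := by
  by_cases h1 : b1 = 0
  · have h2 : b2 ≠ 0 := by
      rintro rfl
      exact hb ⟨h1, rfl, by linear_combination hsum - h1⟩
    refine ⟨fun _ => 0, ?_⟩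
    rintro ⟨e1, e2, e3, h12, h13, h23, -, -, heq⟩
    subst h1
    have : b2 * (e2 - e3) = 0 := by linear_combination heq - e3 * hsum
    exact h23 (sub_eq_zero.mp ((mul_eq_zero.mp this).resolve_left h2))
  · by_cases h2 : b2 = 0
    · refine ⟨fun _ => 0, ?_⟩
      rintro ⟨e1, e2, e3, h12, h13, h23, -, -, heq⟩
      subst h2
      have : b1 * (e1 - e3) = 0 := by linear_combination heq - e3 * hsum
      exact h13 (sub_eq_zero.mp ((mul_eq_zero.mp this).resolve_left h1))
    · by_cases h3 : b3 = 0
      · refine ⟨fun _ => 0, ?_⟩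
        rintro ⟨e1, e2, e3, h12, h13, h23, -, -, heq⟩
        subst h3
        have : b1 * (e1 - e2) = 0 := by linear_combination heq - e2 * hsum
        exact h12 (sub_eq_zero.mp ((mul_eq_zero.mp this).resolve_left h1))
      · -- main case: all coefficients nonzero
        set c : F := -b2 / b1 with hc
        have hbc : b1 * c = -b2 := by rw [hc]; field_simp
        have hc0 : c ≠ 0 := by
          rw [hc]
          exact div_ne_zero (neg_ne_zero.mpr h2) h1
        have hc1 : c ≠ 1 := by
          intro h
          apply h3
          have : b1 = -b2 := by rw [← hbc, h, mul_one]
          linear_combination hsum - this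
        set K : Subfield F := Subfield.closure {c} with hK
        have hcK : c ∈ K := Subfield.subset_closure rfl
        haveI : Countable ↥K := by
          rw [← Cardinal.mk_le_aleph0_iff]
          refine (Subfield.cardinalMk_closure_le_max _).trans ?_
          simp [Cardinal.mk_le_aleph0]
        haveI : Countable (List ↥K) := inferInstance
        obtain ⟨inj, hinj⟩ := exists_injective_nat (List ↥K)
        let B := Module.Basis.ofVectorSpace ↥K F
        letI : LinearOrder (Module.Basis.ofVectorSpaceIndex ↥K F) :=
          IsWellOrder.linearOrder WellOrderingRel
        refine ⟨fun f => inj (topList (B.repr f)), ?_⟩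
        rintro ⟨e1, e2, e3, h12, h13, h23, hc12, hc23, heq⟩
        have t12 : topList (B.repr e1) = topList (B.repr e2) := hinj hc12
        have t23 : topList (B.repr e2) = topList (B.repr e3) := hinj hc23
        set cK : ↥K := ⟨c, hcK⟩ with hcKdef
        have hcK0 : cK ≠ 0 := fun h => hc0 (by simpa [hcKdef] using congrArg Subtype.val h)
        have hcK1 : cK ≠ 1 := fun h => hc1 (by simpa [hcKdef] using congrArg Subtype.val h)
        set x : F := e2 - e3 with hx
        have hx0 : x ≠ 0 := sub_ne_zero.mpr h23
        have hkey : e1 = e3 + cK • x := by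
          have hmul : b1 * (e1 - (e3 + c * (e2 - e3))) = 0 := by
            linear_combination heq - (e2 - e3) * hbc - e3 * hsum
          have h' : e1 = e3 + c * (e2 - e3) :=
            sub_eq_zero.mp ((mul_eq_zero.mp hmul).resolve_left h1)
          have hsm : cK • x = c * x := rfl
          rw [h', hx, hsm]
        have r2 : B.repr e2 = B.repr e3 + B.repr x := by
          rw [← map_add]
          congr 1
          rw [hx]; ring
        have r1 : B.repr e1 = B.repr e3 + cK • B.repr x := by
          rw [hkey, map_add, map_smul]
        have hd0 : B.repr x ≠ 0 := fun h => hx0 (by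
          have := congrArg B.repr.symm h
          simpa using this)
        rw [r1] at t12
        rw [r2] at t12 t23
        exact topList_core cK hcK0 hcK1 _ (B.repr e3) (B.repr x) le_rfl hd0 t12 t23
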